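/- arXiv:2506.05225 — 3 statements merged into one kernel-verified Lean document; each statement's English description precedes it below -/
import Mathlib

section
/- Under the model p = h(X) + ω with E[ω | Z] = 0 and completeness of Z with respect to X, the function h is identified: any h̃ with E[p − h̃(X) | Z] = 0 a.s. satisfies h̃(X) = h(X) almost surely. -/
open MeasureTheory

/-- Identification of the flexible supply function (Theorem 1 of the paper):
under the model `p = h(X) + ω` with `E[ω ∣ Z] = 0` and completeness of `Z` with respect to
`X`, any `h̃` satisfying the same conditional moment restriction agrees with `h` a.s. -/
theorem stmt_1 {Ω : Type*} [MeasurableSpace Ω] (μ : Measure Ω) [IsProbabilityMeasure μ]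
    {n m : ℕ} (p : Ω → ℝ) (X : Ω → (Fin n → ℝ)) (Z : Ω → (Fin m → ℝ))
    (hX : Measurable X) (hZ : Measurable Z) (hp : Measurable p) (hpint : Integrable p μ)
    (complete : ∀ B : (Fin n → ℝ) → ℝ, Measurable B → Integrable (B ∘ X) μ →
      μ[B ∘ X | MeasurableSpace.comap Z inferInstance] =ᵐ[μ] 0 → B ∘ X =ᵐ[μ] 0)
    (h : (Fin n → ℝ) → ℝ) (hh : Measurable h) (hhint : Integrable (h ∘ X) μ)
    (hmoment : μ[(fun a => p a - h (X a)) | MeasurableSpace.comap Z inferInstance] =ᵐ[μ] 0)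
    (htilde : (Fin n → ℝ) → ℝ) (hht : Measurable htilde)
    (hhtint : Integrable (htilde ∘ X) μ)
    (hmoment' : μ[(fun a => p a - htilde (X a)) | MeasurableSpace.comap Z inferInstance]
      =ᵐ[μ] 0) :
    (fun a => htilde (X a)) =ᵐ[μ] (fun a => h (X a)) := by
  set mZ := MeasurableSpace.comap Z inferInstance with hmZ
  have key : μ[(fun x => htilde x - h x) ∘ X | mZ] =ᵐ[μ] 0 := by
    have h1 : Integrable (fun a => p a - h (X a)) μ :=
      hpint.sub hhint
    have h2 : Integrable (fun a => p a - htilde (X a)) μ :=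
      hpint.sub hhtint
    have hsub := condExp_sub (m := mZ) (μ := μ) h1 h2
    have heq : ((fun a => p a - h (X a)) - fun a => p a - htilde (X a))
        = (fun x => htilde x - h x) ∘ X := by
      funext a; simp only [Pi.sub_apply, Function.comp_apply]; ring
    rw [heq] at hsub
    calc μ[(fun x => htilde x - h x) ∘ X | mZ]
        =ᵐ[μ] μ[(fun a => p a - h (X a)) | mZ] - μ[(fun a => p a - htilde (X a)) | mZ] :=
          hsub
      _ =ᵐ[μ] 0 := by
          filter_upwards [hmoment, hmoment'] with a ha ha'
          simp [ha, ha']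
  have hB := complete (fun x => htilde x - h x) (hht.sub hh)
    (by exact hhtint.sub hhint) key
  filter_upwards [hB] with a ha
  have : htilde (X a) - h (X a) = 0 := ha
  linarith
end

section
/- Let H be the J×J matrix with H_{jk} = κ for j ≠ k and H_{jj} = 1, where 0 ≤ κ ≤ 1, and let D' be the logit price-derivative matrix with α < 0 and shares s_j ∈ (0,1), Σ s_j < 1. Then the matrix −(H ⊙ D') is invertible. -/
/-- Invertibility of `−(H ⊙ D')` for the profit-weight ownership matrix
(`H_{jj} = 1`, `H_{jk} = κ`) and the logit Jacobian `D'`. -/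
theorem stmt_7 {J : ℕ} (α κ : ℝ) (hα : α < 0) (hκ0 : 0 ≤ κ) (hκ1 : κ ≤ 1)
    (s : Fin J → ℝ) (hs : ∀ j, 0 < s j) (hsum : ∑ j, s j < 1)
    (M : Matrix (Fin J) (Fin J) ℝ)
    (hM : ∀ j k, M j k =
      if j = k then -(1 * (α * s j * (1 - s j))) else -(κ * (-(α * s j * s k)))) :
    IsUnit M.det := by
  have hα' : (0:ℝ) < -α := by linarith
  have hdet : M.det ≠ 0 := by
    apply det_ne_zero_of_sum_row_lt_diag
    intro k
    have hsk := hs k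
    have hadd := Finset.add_sum_erase Finset.univ s (Finset.mem_univ k)
    have hrest : ∑ j ∈ Finset.univ.erase k, s j < 1 - s k := by linarith
    have hs1 : (0:ℝ) < 1 - s k := by
      have : (0:ℝ) ≤ ∑ j ∈ Finset.univ.erase k, s j :=
        Finset.sum_nonneg fun j _ => (hs j).le
      linarith
    have hkk : M k k = (-α) * s k * (1 - s k) := by rw [hM, if_pos rfl]; ring
    have hnormkk : ‖M k k‖ = (-α) * s k * (1 - s k) := by
      rw [hkk, Real.norm_eq_abs, abs_of_pos (mul_pos (mul_pos hα' hsk) hs1)]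
    calc ∑ j ∈ Finset.univ.erase k, ‖M k j‖
        = ∑ j ∈ Finset.univ.erase k, κ * ((-α) * s k * s j) := by
          refine Finset.sum_congr rfl fun j hj => ?_
          have hjk : k ≠ j := fun h => (Finset.mem_erase.mp hj).1 h.symm
          have hsj := hs j
          have hentry : M k j = κ * (α * s k * s j) := by
            rw [hM k j, if_neg hjk]; ring
          have hneg : κ * (α * s k * s j) ≤ 0 :=
            mul_nonpos_of_nonneg_of_nonpos hκ0 (by nlinarith [mul_pos hsk hsj])
          rw [hentry, Real.norm_eq_abs, abs_of_nonpos hneg]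
          ring
      _ ≤ ∑ j ∈ Finset.univ.erase k, (-α) * s k * s j := by
          refine Finset.sum_le_sum fun j _ => ?_
          have hsj := hs j
          exact mul_le_of_le_one_left (le_of_lt (mul_pos (mul_pos hα' hsk) hsj)) hκ1
      _ = (-α) * s k * ∑ j ∈ Finset.univ.erase k, s j := by
          rw [Finset.mul_sum]
      _ < (-α) * s k * (1 - s k) :=
          mul_lt_mul_of_pos_left hrest (mul_pos hα' hsk)
      _ = ‖M k k‖ := hnormkk.symm
  exact isUnit_iff_ne_zero.mpr hdet
end

section
/- Holm's step-down simultaneous coverage: let ψ̂_1,…,ψ̂_d be estimators with ψ̂_j ± σ_j T_{α/(d+1−k)} being, for each fixed ordering, marginal confidence bounds where P(|ψ̂_j − ψ_j| > σ_j T_β) ≤ β for every β. Then the union over all d! permutations of the Holm-ordered intervals contains the true vector (ψ_1,…,ψ_d) with probability at least 1 − α·Σ_{k=1}^d 1/(d+1−k) ≥ 1 − α·d·H_d, and in particular for d=1 coverage is at least 1 − α. -/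
open MeasureTheory

/-- Holm step-down simultaneous coverage: the union over all `d!` permutations of the
Holm-ordered boxes (coordinate `j` in rank `k = π(j)+1` using critical value
`T(α/(d+1−k))`) covers the true vector with probability at least
`1 − α ∑_{k=1}^d 1/(d+1−k)`, which is at least `1 − α d H_d`; for `d = 1` coverage is
at least `1 − α`. -/
theorem stmt_12 {Ω : Type*} [MeasurableSpace Ω] (μ : Measure Ω) [IsProbabilityMeasure μ]
    {d : ℕ} (hd : 1 ≤ d)
    (ψhat : Fin d → Ω → ℝ) (ψ σ : Fin d → ℝ) (T : ℝ → ℝ) (α : ℝ)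
    (hα0 : 0 < α) (hα1 : α < 1)
    (hmarg : ∀ j, ∀ β : ℝ, 0 < β → β < 1 →
      μ {a | σ j * T β < |ψhat j a - ψ j|} ≤ ENNReal.ofReal β) :
    ENNReal.ofReal (1 - α * ∑ k ∈ Finset.range d, (1 : ℝ) / ((d : ℝ) - k)) ≤
      μ {a | ∃ π : Equiv.Perm (Fin d),
        ∀ j, |ψhat j a - ψ j| ≤ σ j * T (α / ((d : ℝ) - (π j : ℕ)))} ∧
    1 - α * ∑ k ∈ Finset.range d, (1 : ℝ) / ((d : ℝ) - k) ≥
      1 - α * d * ∑ k ∈ Finset.range d, (1 : ℝ) / ((k : ℝ) + 1) ∧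
    (d = 1 → ENNReal.ofReal (1 - α) ≤
      μ {a | ∃ π : Equiv.Perm (Fin d),
        ∀ j, |ψhat j a - ψ j| ≤ σ j * T (α / ((d : ℝ) - (π j : ℕ)))}) := by
  set S : ℝ := ∑ k ∈ Finset.range d, (1 : ℝ) / ((d : ℝ) - k) with hS
  set E : Set Ω := {a | ∃ π : Equiv.Perm (Fin d),
      ∀ j, |ψhat j a - ψ j| ≤ σ j * T (α / ((d : ℝ) - (π j : ℕ)))}
  have hpos : ∀ j : Fin d, (0 : ℝ) < (d : ℝ) - (j : ℕ) := by
    intro j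
    have := j.2
    have : ((j : ℕ) : ℝ) < (d : ℝ) := by exact_mod_cast this
    linarith
  have hβpos : ∀ j : Fin d, 0 < α / ((d : ℝ) - (j : ℕ)) := fun j =>
    div_pos hα0 (hpos j)
  have hβlt : ∀ j : Fin d, α / ((d : ℝ) - (j : ℕ)) < 1 := by
    intro j
    have h1 : (1 : ℝ) ≤ (d : ℝ) - (j : ℕ) := by
      have hj : (j : ℕ) + 1 ≤ d := j.2
      have : ((j : ℕ) : ℝ) + 1 ≤ (d : ℝ) := by exact_mod_cast hj
      linarith
    calc α / ((d : ℝ) - (j : ℕ)) ≤ α / 1 := by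
          apply div_le_div_of_nonneg_left hα0.le one_pos h1
      _ = α := div_one α
      _ < 1 := hα1
  -- coverage
  have hSnonneg : 0 ≤ S := by
    apply Finset.sum_nonneg
    intro k hk
    have hk' := Finset.mem_range.mp hk
    have h2 : ((k : ℕ) : ℝ) < (d : ℝ) := by exact_mod_cast hk'
    have h3 : (0:ℝ) < (d:ℝ) - k := by linarith
    positivity
  have hcov : ENNReal.ofReal (1 - α * S) ≤ μ E := by
    set A : Fin d → Set Ω := fun j =>
      {a | σ j * T (α / ((d : ℝ) - (j : ℕ))) < |ψhat j a - ψ j|}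
    have hsub : (⋃ j, A j)ᶜ ⊆ E := by
      intro a ha
      simp only [Set.mem_compl_iff, Set.mem_iUnion, not_exists] at ha
      refine ⟨Equiv.refl _, fun j => ?_⟩
      have := ha j
      simp only [A, Set.mem_setOf_eq, not_lt] at this
      simpa using this
    have hunion : μ (⋃ j, A j) ≤ ENNReal.ofReal (α * S) := by
      calc μ (⋃ j, A j) ≤ ∑ j, μ (A j) := measure_iUnion_fintype_le μ A
        _ ≤ ∑ j : Fin d, ENNReal.ofReal (α / ((d : ℝ) - (j : ℕ))) := by
            apply Finset.sum_le_sum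
            intro j _
            exact hmarg j _ (hβpos j) (hβlt j)
        _ = ENNReal.ofReal (∑ j : Fin d, α / ((d : ℝ) - (j : ℕ))) := by
            rw [ENNReal.ofReal_sum_of_nonneg]
            intro j _
            exact (hβpos j).le
        _ = ENNReal.ofReal (α * S) := by
            congr 1
            rw [hS, Finset.mul_sum, Fin.sum_univ_eq_sum_range
              (fun k => α / ((d : ℝ) - (k : ℕ)))]
            apply Finset.sum_congr rfl
            intro k _
            rw [mul_one_div]
    have h1 : (1 : ENNReal) ≤ μ (⋃ j, A j) + μ ((⋃ j, A j)ᶜ) := by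
      have := measure_union_le (μ := μ) (⋃ j, A j) (⋃ j, A j)ᶜ
      rwa [Set.union_compl_self, measure_univ] at this
    have h2 : (1 : ENNReal) ≤ ENNReal.ofReal (α * S) + μ E :=
      h1.trans (add_le_add hunion ((measure_mono hsub)))
    have h3 : ENNReal.ofReal (1 - α * S)
        = 1 - ENNReal.ofReal (α * S) := by
      rw [← ENNReal.ofReal_one, ← ENNReal.ofReal_sub _ (by positivity)]
    rw [h3, tsub_le_iff_left]
    exact h2
  refine ⟨hcov, ?_, ?_⟩
  · -- S ≤ d * H_d since S = H_d
    have hSeq : S = ∑ k ∈ Finset.range d, (1 : ℝ) / ((k : ℝ) + 1) := by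
      rw [hS, ← Finset.sum_range_reflect (fun k => (1 : ℝ) / ((k : ℝ) + 1)) d]
      apply Finset.sum_congr rfl
      intro k hk
      have hk' := Finset.mem_range.mp hk
      congr 1
      have h : d - 1 - k = d - (k + 1) := by omega
      rw [h, Nat.cast_sub (by omega : k + 1 ≤ d)]
      push_cast
      ring
    have hH : 0 ≤ ∑ k ∈ Finset.range d, (1 : ℝ) / ((k : ℝ) + 1) := by
      apply Finset.sum_nonneg; intro k _; positivity
    have hd' : (1 : ℝ) ≤ d := by exact_mod_cast hd
    rw [hSeq]
    have : α * ∑ k ∈ Finset.range d, (1 : ℝ) / ((k : ℝ) + 1)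
        ≤ α * d * ∑ k ∈ Finset.range d, (1 : ℝ) / ((k : ℝ) + 1) := by
      rw [mul_assoc]
      apply mul_le_mul_of_nonneg_left _ hα0.le
      nlinarith
    linarith
  · intro hd1
    subst hd1
    have : S = 1 := by norm_num [hS]
    rw [this] at hcov
    simpa using hcov
end
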